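/- Discrete energy stability of the fully discrete semi-implicit first-order scheme: if γ is even and positive semidefinite, K_N is a set of grid functions with V ∈ K_N, and U* ∈ K_N minimizes J_N over K_N (i.e. J_N(U*) ≤ J_N(U) for all U ∈ K_N), then E_N(U*) ≤ J_N(U*) ≤ J_N(V) = E_N(V). -/
import Mathlib


noncomputable section

/-- The discrete grid `Γ = (ℤ/N₁ℤ) × (ℤ/N₂ℤ)`. -/
abbrev Grid (N₁ N₂ : ℕ) := ZMod N₁ × ZMod N₂

variable {N₁ N₂ : ℕ} [NeZero N₁] [NeZero N₂]

/-- Discrete inner product `⟨U,V⟩ = h Σ_p U_p V_p`. -/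
def dip (h : ℝ) (U V : Grid N₁ N₂ → ℝ) : ℝ := h * ∑ p : Grid N₁ N₂, U p * V p

/-- Discrete circular convolution `(γ ⊛ U)_p = h Σ_q γ_{p−q} U_q`. -/
def dconv (h : ℝ) (γ U : Grid N₁ N₂ → ℝ) : Grid N₁ N₂ → ℝ :=
  fun p => h * ∑ q : Grid N₁ N₂, γ (p - q) * U q

/-- Discrete energy
`E_N(U) = h Σ_p [ (ξ/2)U_p² + c + ψ(U_p) ] − (1/2)⟨γ⊛U, U⟩`. -/
def dEnergy (h ξ c : ℝ) (ψ : ℝ → ℝ) (γ : Grid N₁ N₂ → ℝ) (U : Grid N₁ N₂ → ℝ) : ℝ :=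
  h * ∑ p : Grid N₁ N₂, (ξ / 2 * (U p) ^ 2 + c + ψ (U p))
    - 1 / 2 * dip h (dconv h γ U) U

/-- Discrete one-step objective
`J_N(U) = h Σ_p [ (ξ/2)U_p² + c + ψ(U_p) ] − (1/2)⟨γ⊛V, V⟩ − ⟨γ⊛V, U − V⟩ + (1/(2τ))‖U − V‖²`. -/
def dObj (h τ ξ c : ℝ) (ψ : ℝ → ℝ) (γ : Grid N₁ N₂ → ℝ) (V U : Grid N₁ N₂ → ℝ) : ℝ :=
  h * ∑ p : Grid N₁ N₂, (ξ / 2 * (U p) ^ 2 + c + ψ (U p))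
    - 1 / 2 * dip h (dconv h γ V) V - dip h (dconv h γ V) (U - V)
    + 1 / (2 * τ) * dip h (U - V) (U - V)


lemma dconv_sub' (h : ℝ) (γ U V : Grid N₁ N₂ → ℝ) :
    dconv h γ (U - V) = dconv h γ U - dconv h γ V := by
  funext p
  simp [dconv, mul_sub, Finset.sum_sub_distrib]

lemma dip_sub_left' (h : ℝ) (A B C : Grid N₁ N₂ → ℝ) :
    dip h (A - B) C = dip h A C - dip h B C := by
  simp [dip, sub_mul, Finset.sum_sub_distrib, mul_sub]

lemma dip_sub_right' (h : ℝ) (A B C : Grid N₁ N₂ → ℝ) :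
    dip h A (B - C) = dip h A B - dip h A C := by
  simp [dip, mul_sub, Finset.sum_sub_distrib]

lemma dip_conv_symm' (h : ℝ) (γ : Grid N₁ N₂ → ℝ)
    (hγ : ∀ p : Grid N₁ N₂, γ (-p) = γ p) (U V : Grid N₁ N₂ → ℝ) :
    dip h (dconv h γ U) V = dip h (dconv h γ V) U := by
  have key : ∀ p q : Grid N₁ N₂, γ (p - q) = γ (q - p) := by
    intro p q; rw [← hγ (q - p), neg_sub]
  unfold dip dconv
  simp only [Finset.mul_sum, Finset.sum_mul]
  rw [Finset.sum_comm]
  refine Finset.sum_congr rfl fun p _ => Finset.sum_congr rfl fun q _ => ?_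
  rw [key q p]; ring

lemma dip_self_nonneg' (h : ℝ) (hh : 0 ≤ h) (W : Grid N₁ N₂ → ℝ) :
    0 ≤ dip h W W :=
  mul_nonneg hh (Finset.sum_nonneg fun _ _ => mul_self_nonneg _)

/-- **Discrete energy stability of the fully discrete semi-implicit first-order scheme**:
if `γ` is even and positive semidefinite, `V ∈ K_N`, and `U* ∈ K_N` minimizes `J_N` over
`K_N`, then `E_N(U*) ≤ J_N(U*) ≤ J_N(V) = E_N(V)`. -/
theorem discrete_energy_stability_first_order
    {N₁ N₂ : ℕ} [NeZero N₁] [NeZero N₂] (h : ℝ) (hh : 0 < h)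
    (τ : ℝ) (hτ : 0 < τ) (ξ : ℝ) (hξ : 0 ≤ ξ) (c : ℝ) (ψ : ℝ → ℝ)
    (γ : Grid N₁ N₂ → ℝ)
    (hγeven : ∀ p : Grid N₁ N₂, γ (-p) = γ p)
    (hγpsd : ∀ W : Grid N₁ N₂ → ℝ, 0 ≤ dip h (dconv h γ W) W)
    (KN : Set (Grid N₁ N₂ → ℝ))
    (V : Grid N₁ N₂ → ℝ) (hV : V ∈ KN)
    (Ustar : Grid N₁ N₂ → ℝ) (hUstar : Ustar ∈ KN)
    (hmin : ∀ U ∈ KN, dObj h τ ξ c ψ γ V Ustar ≤ dObj h τ ξ c ψ γ V U) :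
    dEnergy h ξ c ψ γ Ustar ≤ dObj h τ ξ c ψ γ V Ustar ∧
      dObj h τ ξ c ψ γ V Ustar ≤ dObj h τ ξ c ψ γ V V ∧
      dObj h τ ξ c ψ γ V V = dEnergy h ξ c ψ γ V := by
  constructor
  · -- E(U*) ≤ J(U*)
    have hsplit : dip h (dconv h γ Ustar) Ustar
        = dip h (dconv h γ V) V + 2 * dip h (dconv h γ V) (Ustar - V)
          + dip h (dconv h γ (Ustar - V)) (Ustar - V) := by
      rw [dconv_sub', dip_sub_left', dip_sub_right', dip_sub_right',
        dip_conv_symm' h γ hγeven Ustar V]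
      ring
    have h1 := hγpsd (Ustar - V)
    have h2 := dip_self_nonneg' h hh.le (Ustar - V)
    have hτ' : 0 ≤ 1 / (2 * τ) := by positivity
    unfold dEnergy dObj
    nlinarith [mul_nonneg hτ' h2]
  constructor
  · exact hmin V hV
  · simp [dObj, dEnergy, dip, sub_self]


end
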